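/- Let γ = (c_1,…,c_n) be a clan that avoids the seven patterns (1,+,−,1), (1,−,+,1), (1,2,1,2), (1,+,2,2,1), (1,−,2,2,1), (1,2,2,+,1), (1,2,2,−,1) and contains at least one natural number entry. Then there exists a pair (i,j) of γ such that every entry c_k with i < k < j is a sign, and all such signs are equal (all + or all −). -/

import Mathlib

/-- An entry of a clan: a plus sign, a minus sign, or a natural number. -/
inductive CEntry : Type where
  | plus : CEntry
  | minus : CEntry
  | num : ℕ → CEntry
deriving DecidableEq

/-- Whether an entry is a natural number. -/
def CEntry.isNum : CEntry → Bool
  | .num _ => true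
  | _ => false

/-- Whether an entry is a sign (`+` or `−`). -/
def CEntry.isSign : CEntry → Bool
  | .num _ => false
  | _ => true

/-- A clan of signature `(p, q)`: a sequence of `n = p + q` symbols, each `+`, `−`, or a
natural number, such that every natural number occurring in the sequence occurs exactly
twice, and the number of `+` entries plus the number of pairs of equal numbers is `p`. -/
structure Clan (n p q : ℕ) : Type where
  c : Fin n → CEntry
  total : n = p + q
  twice : ∀ a : ℕ, (Finset.univ.filter fun i => c i = CEntry.num a).card = 0 ∨
      (Finset.univ.filter fun i => c i = CEntry.num a).card = 2
  signature : (Finset.univ.filter fun i => c i = CEntry.plus).card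
      + (Finset.univ.filter fun i => (c i).isNum = true).card / 2 = p

namespace Clan

variable {n p q : ℕ}

/-- `(i, j)` is a pair of the clan `γ`: `i < j` and `c i = c j` is a natural number. -/
def IsPair (γ : Clan n p q) (i j : Fin n) : Prop :=
  i < j ∧ γ.c i = γ.c j ∧ (γ.c i).isNum = true

instance (γ : Clan n p q) (i j : Fin n) : Decidable (γ.IsPair i j) := by
  unfold IsPair; infer_instance

/-- The finset of all pairs of the clan `γ`. -/
def pairs (γ : Clan n p q) : Finset (Fin n × Fin n) :=
  Finset.univ.filter fun x => γ.IsPair x.1 x.2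

/-- The contribution `j − i − #{pairs (s,t) of γ with s < i < t < j}` of a pair `(i, j)`
to the dimension of the orbit parametrized by `γ`. -/
def summand (γ : Clan n p q) (x : Fin n × Fin n) : ℕ :=
  (x.2 : ℕ) - (x.1 : ℕ) -
    (γ.pairs.filter fun y => y.1 < x.1 ∧ x.1 < y.2 ∧ y.2 < x.2).card

/-- `d_{p,q} = (p(p−1) + q(q−1))/2`, the dimension of the closed orbits. -/
def dpq (p q : ℕ) : ℕ := (p * (p - 1) + q * (q - 1)) / 2

/-- The dimension of the `GL_p × GL_q`-orbit on the flag variety parametrized by `γ`. -/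
def D (γ : Clan n p q) : ℕ := dpq p q + ∑ x ∈ γ.pairs, γ.summand x

/-- `γ` includes the pattern `(1, +, −, 1)`. -/
def Includes1pm1 (γ : Clan n p q) : Prop :=
  ∃ i k l j : Fin n, i < k ∧ k < l ∧ l < j ∧
    γ.c k = CEntry.plus ∧ γ.c l = CEntry.minus ∧ γ.IsPair i j

/-- `γ` includes the pattern `(1, −, +, 1)`. -/
def Includes1mp1 (γ : Clan n p q) : Prop :=
  ∃ i k l j : Fin n, i < k ∧ k < l ∧ l < j ∧
    γ.c k = CEntry.minus ∧ γ.c l = CEntry.plus ∧ γ.IsPair i j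

/-- `γ` includes the pattern `(1, 2, 1, 2)`. -/
def Includes1212 (γ : Clan n p q) : Prop :=
  ∃ i s j t : Fin n, i < s ∧ s < j ∧ j < t ∧
    γ.IsPair i j ∧ γ.IsPair s t ∧ γ.c i ≠ γ.c s

/-- `γ` includes the pattern `(1, +, 2, 2, 1)`. -/
def Includes1p221 (γ : Clan n p q) : Prop :=
  ∃ i k s t j : Fin n, i < k ∧ k < s ∧ s < t ∧ t < j ∧
    γ.c k = CEntry.plus ∧ γ.IsPair i j ∧ γ.IsPair s t ∧ γ.c i ≠ γ.c s

/-- `γ` includes the pattern `(1, −, 2, 2, 1)`. -/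
def Includes1m221 (γ : Clan n p q) : Prop :=
  ∃ i k s t j : Fin n, i < k ∧ k < s ∧ s < t ∧ t < j ∧
    γ.c k = CEntry.minus ∧ γ.IsPair i j ∧ γ.IsPair s t ∧ γ.c i ≠ γ.c s

/-- `γ` includes the pattern `(1, 2, 2, +, 1)`. -/
def Includes122p1 (γ : Clan n p q) : Prop :=
  ∃ i s t k j : Fin n, i < s ∧ s < t ∧ t < k ∧ k < j ∧
    γ.c k = CEntry.plus ∧ γ.IsPair i j ∧ γ.IsPair s t ∧ γ.c i ≠ γ.c s

/-- `γ` includes the pattern `(1, 2, 2, −, 1)`. -/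
def Includes122m1 (γ : Clan n p q) : Prop :=
  ∃ i s t k j : Fin n, i < s ∧ s < t ∧ t < k ∧ k < j ∧
    γ.c k = CEntry.minus ∧ γ.IsPair i j ∧ γ.IsPair s t ∧ γ.c i ≠ γ.c s

/-- `γ` avoids the seven patterns `(1,+,−,1)`, `(1,−,+,1)`, `(1,2,1,2)`, `(1,+,2,2,1)`,
`(1,−,2,2,1)`, `(1,2,2,+,1)`, `(1,2,2,−,1)`. -/
def AvoidsSeven (γ : Clan n p q) : Prop :=
  ¬ γ.Includes1pm1 ∧ ¬ γ.Includes1mp1 ∧ ¬ γ.Includes1212 ∧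
    ¬ γ.Includes1p221 ∧ ¬ γ.Includes1m221 ∧ ¬ γ.Includes122p1 ∧ ¬ γ.Includes122m1

end Clan

/-- The move replacing a pair of opposite signs of `γ` in positions `i < j` by a pair of
equal numbers not occurring in `γ`, yielding `γ'`. -/
def ReplaceMove {n p q : ℕ} (γ γ' : Clan n p q) : Prop :=
  ∃ i j : Fin n, i < j ∧
    ((γ.c i = CEntry.plus ∧ γ.c j = CEntry.minus) ∨
      (γ.c i = CEntry.minus ∧ γ.c j = CEntry.plus)) ∧
    (∃ a : ℕ, (∀ k, γ.c k ≠ CEntry.num a) ∧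
      γ'.c i = CEntry.num a ∧ γ'.c j = CEntry.num a) ∧
    ∀ k, k ≠ i → k ≠ j → γ'.c k = γ.c k


lemma exists_partner {n p q : ℕ} (γ : Clan n p q) {k : Fin n} {a : ℕ}
    (hk : γ.c k = CEntry.num a) : ∃ k', k' ≠ k ∧ γ.c k' = CEntry.num a ∧
      ∀ m, γ.c m = CEntry.num a → m = k ∨ m = k' := by
  have hkmem : k ∈ Finset.univ.filter fun i => γ.c i = CEntry.num a := by
    simp [hk]
  have h2 : (Finset.univ.filter fun i => γ.c i = CEntry.num a).card = 2 := by
    rcases γ.twice a with h0 | h2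
    · exact absurd (Finset.card_eq_zero.mp h0) (Finset.ne_empty_of_mem hkmem)
    · exact h2
  obtain ⟨x, y, hxy, hset⟩ := Finset.card_eq_two.mp h2
  rw [hset] at hkmem
  rcases Finset.mem_insert.mp hkmem with rfl | hky
  · refine ⟨y, fun h => hxy h.symm, ?_, ?_⟩
    · have : y ∈ Finset.univ.filter fun i => γ.c i = CEntry.num a := by
        rw [hset]; simp
      simpa using this
    · intro m hm
      have : m ∈ ({k, y} : Finset (Fin n)) := by
        rw [← hset]; simp [hm]
      simpa using this
  · have hky : k = y := by simpa using hky
    subst hky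
    refine ⟨x, fun h => hxy h, ?_, ?_⟩
    · have : x ∈ Finset.univ.filter fun i => γ.c i = CEntry.num a := by
        rw [hset]; simp
      simpa using this
    · intro m hm
      have : m ∈ ({x, k} : Finset (Fin n)) := by
        rw [← hset]; simp [hm]
      rcases Finset.mem_insert.mp this with rfl | hm'
      · exact Or.inr rfl
      · exact Or.inl (by simpa using hm')

/-- A clan avoiding the seven patterns and containing at least one
natural number entry has a pair `(i, j)` such that every entry strictly between `i`
and `j` is a sign and all these signs are equal. -/
theorem exists_innermost_pair {n p q : ℕ} (γ : Clan n p q)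
    (h : γ.AvoidsSeven) (hnum : ∃ k : Fin n, (γ.c k).isNum = true) :
    ∃ i j : Fin n, γ.IsPair i j ∧
      (∀ k : Fin n, i < k → k < j → (γ.c k).isSign = true) ∧
      (∀ k l : Fin n, i < k → k < j → i < l → l < j → γ.c k = γ.c l) := by
  classical
  -- pairs is nonempty
  obtain ⟨k0, hk0⟩ := hnum
  obtain ⟨a0, ha0⟩ : ∃ a, γ.c k0 = CEntry.num a := by
    cases h0 : γ.c k0 with
    | plus => rw [h0] at hk0; simp [CEntry.isNum] at hk0
    | minus => rw [h0] at hk0; simp [CEntry.isNum] at hk0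
    | num a => exact ⟨a, rfl⟩
  obtain ⟨k1, hk1ne, hk1, _⟩ := exists_partner γ ha0
  have hpne : γ.pairs.Nonempty := by
    rcases lt_or_gt_of_ne hk1ne with hlt | hgt
    · exact ⟨(k1, k0), Finset.mem_filter.mpr ⟨Finset.mem_univ _, (show γ.IsPair k1 k0 from ⟨hlt, by rw [hk1, ha0], by simp [hk1, CEntry.isNum]⟩)⟩⟩
    · exact ⟨(k0, k1), Finset.mem_filter.mpr ⟨Finset.mem_univ _, (show γ.IsPair k0 k1 from ⟨hgt, by rw [hk1, ha0], by simp [ha0, CEntry.isNum]⟩)⟩⟩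
  obtain ⟨x, hxmem, hxmin⟩ := γ.pairs.exists_min_image
    (fun x => (x.2 : ℕ) - (x.1 : ℕ)) hpne
  obtain ⟨i, j⟩ := x
  have hij : γ.IsPair i j := by
    simpa [Clan.pairs] using hxmem
  obtain ⟨hlt, heq, hnumij⟩ := hij
  obtain ⟨a, ha⟩ : ∃ a, γ.c i = CEntry.num a := by
    cases h0 : γ.c i with
    | plus => rw [h0] at hnumij; simp [CEntry.isNum] at hnumij
    | minus => rw [h0] at hnumij; simp [CEntry.isNum] at hnumij
    | num a => exact ⟨a, rfl⟩
  have haj : γ.c j = CEntry.num a := heq ▸ ha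
  obtain ⟨h1, h2, h3, _, _, _, _⟩ := h
  -- every entry strictly between is a sign
  have hsign : ∀ k : Fin n, i < k → k < j → (γ.c k).isSign = true := by
    intro k hik hkj
    by_contra hns
    obtain ⟨b, hb⟩ : ∃ b, γ.c k = CEntry.num b := by
      cases h0 : γ.c k with
      | plus => rw [h0] at hns; simp [CEntry.isSign] at hns
      | minus => rw [h0] at hns; simp [CEntry.isSign] at hns
      | num b => exact ⟨b, rfl⟩
    obtain ⟨k', hk'ne, hk', hk'only⟩ := exists_partner γ hb
    have hba : γ.c i ≠ γ.c k := by
      intro hcontr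
      have hba' : b = a := by rw [ha, hb] at hcontr; injection hcontr.symm
      subst hba'
      have hi' : i = k ∨ i = k' := hk'only i ha
      have hj' : j = k ∨ j = k' := hk'only j haj
      rcases hi' with hi' | hi' <;> rcases hj' with hj' | hj' <;>
        first
        | exact absurd (hi'.trans hj'.symm) (ne_of_lt hlt)
        | exact absurd hi' (ne_of_lt hik)
        | exact absurd hj' (ne_of_lt hkj).symm
    have hk'i : k' ≠ i := fun hh => hba ((hh ▸ hk').trans hb.symm)
    have hk'j : k' ≠ j := fun hh => hba ((heq.trans (hh ▸ hk')).trans hb.symm)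
    rcases lt_trichotomy k' i with hc | hc | hc
    · -- k' < i < k < j : pattern 1212 with pairs (k', k), (i, j)
      exact h3 ⟨k', i, k, j, hc, hik, hkj,
        ⟨hc.trans hik, by rw [hk', hb], by rw [hk', CEntry.isNum]⟩,
        ⟨hlt, heq, hnumij⟩, fun hh => hba (by rw [← hh, hk', hb])⟩
    · exact hk'i hc
    · rcases lt_trichotomy k' j with hc2 | hc2 | hc2
      · -- both k, k' strictly between: contradicts minimality
        rcases lt_trichotomy k k' with hkk | hkk | hkk
        · have hmem : (k, k') ∈ γ.pairs := by
            exact Finset.mem_filter.mpr ⟨Finset.mem_univ _, (show γ.IsPair k k' from ⟨hkk, by rw [hb, hk'], by simp [hb, CEntry.isNum]⟩)⟩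
          have hmin : (j : ℕ) - (i : ℕ) ≤ (k' : ℕ) - (k : ℕ) := hxmin (k, k') hmem
          omega
        · exact hk'ne hkk.symm
        · have hmem : (k', k) ∈ γ.pairs := by
            exact Finset.mem_filter.mpr ⟨Finset.mem_univ _, (show γ.IsPair k' k from ⟨hkk, by rw [hb, hk'], by simp [hk', CEntry.isNum]⟩)⟩
          have hmin : (j : ℕ) - (i : ℕ) ≤ (k : ℕ) - (k' : ℕ) := hxmin (k', k) hmem
          have hik' : i < k' := hc
          omega
      · exact hk'j hc2
      · -- i < k < j < k' : pattern 1212 with pairs (i, j), (k, k')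
        exact h3 ⟨i, k, j, k', hik, hkj, hc2,
          ⟨hlt, heq, hnumij⟩,
          ⟨hkj.trans hc2, by rw [hb, hk'], by rw [hb, CEntry.isNum]⟩, hba⟩
  refine ⟨i, j, ⟨hlt, heq, hnumij⟩, hsign, ?_⟩
  intro k l hik hkj hil hlj
  by_contra hne
  have hsk := hsign k hik hkj
  have hsl := hsign l hil hlj
  have hkey : (γ.c k = CEntry.plus ∧ γ.c l = CEntry.minus) ∨
      (γ.c k = CEntry.minus ∧ γ.c l = CEntry.plus) := by
    cases hck : γ.c k with
    | num b => rw [hck] at hsk; simp [CEntry.isSign] at hsk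
    | plus =>
      cases hcl : γ.c l with
      | num b => rw [hcl] at hsl; simp [CEntry.isSign] at hsl
      | plus => exact absurd (hck.trans hcl.symm) hne
      | minus => exact Or.inl ⟨rfl, rfl⟩
    | minus =>
      cases hcl : γ.c l with
      | num b => rw [hcl] at hsl; simp [CEntry.isSign] at hsl
      | plus => exact Or.inr ⟨rfl, rfl⟩
      | minus => exact absurd (hck.trans hcl.symm) hne
  have hkl : k ≠ l := fun hh => hne (hh ▸ rfl)
  rcases lt_or_gt_of_ne hkl with hko | hko
  · rcases hkey with ⟨hp, hm⟩ | ⟨hm, hp⟩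
    · exact h1 ⟨i, k, l, j, hik, hko, hlj, hp, hm, ⟨hlt, heq, hnumij⟩⟩
    · exact h2 ⟨i, k, l, j, hik, hko, hlj, hm, hp, ⟨hlt, heq, hnumij⟩⟩
  · rcases hkey with ⟨hp, hm⟩ | ⟨hm, hp⟩
    · exact h2 ⟨i, l, k, j, hil, hko, hkj, hm, hp, ⟨hlt, heq, hnumij⟩⟩
    · exact h1 ⟨i, l, k, j, hil, hko, hkj, hp, hm, ⟨hlt, heq, hnumij⟩⟩
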